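/- If F is a finite subset of ℤ^d, g : ℤ^d → ℤ is bounded, 𝟙_F * g = k identically for some integer k, and p is a prime with p > (sup g - inf g)·|F|, then 𝟙_{pF} * g = k identically, where pF = {p·f : f ∈ F}. -/

import Mathlib

open Finsupp

namespace DilAux

variable {G : Type*} [AddCommGroup G] (g : G → ℤ)

noncomputable def Phi (x : G) : AddMonoidAlgebra ℤ G →+ ℤ :=
  (Finsupp.liftAddHom fun y => AddMonoidHom.mulRight (g (x - y))).comp
    AddMonoidAlgebra.coeffAddEquiv.toAddMonoidHom

lemma Phi_single (x y : G) (c : ℤ) :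
    Phi g x (AddMonoidAlgebra.single y c) = c * g (x - y) :=
  Finsupp.liftAddHom_apply_single _ _ _

lemma Phi_mul_single (x f' : G) (a : AddMonoidAlgebra ℤ G) :
    Phi g x (a * AddMonoidAlgebra.single f' 1) = Phi g (x - f') a := by
  induction a using AddMonoidAlgebra.induction_linear with
  | zero => simp
  | add a b ha hb => rw [add_mul, map_add, map_add, ha, hb]
  | single y c =>
      rw [AddMonoidAlgebra.single_mul_single, mul_one, Phi_single, Phi_single,
        sub_add_eq_sub_sub, sub_right_comm]

lemma dvd_Phi (x : G) (a : AddMonoidAlgebra ℤ G) (q : ℤ) (h : ∀ y, q ∣ a.coeff y) :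
    q ∣ Phi g x a := by
  have : Phi g x a = a.coeff.sum fun y c => c * g (x - y) := by
    rw [Phi]
    exact Finsupp.liftAddHom_apply _ _
  rw [this, Finsupp.sum]
  exact Finset.dvd_sum fun y _ => (h y).mul_right _

end DilAux

open DilAux in
theorem stmt_0 (d : ℕ) (F : Finset (Fin d → ℤ)) (g : (Fin d → ℤ) → ℤ)
    (hbdd_above : BddAbove (Set.range g)) (hbdd_below : BddBelow (Set.range g))
    (k : ℤ) (hk : ∀ x : Fin d → ℤ, ∑ f ∈ F, g (x - f) = k)
    (p : ℕ) (hp : p.Prime)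
    (hlarge : (sSup (Set.range g) - sInf (Set.range g)) * F.card < (p : ℤ)) :
    ∀ x : Fin d → ℤ, ∑ f ∈ F.image (fun f => (p : ℤ) • f), g (x - f) = k := by
  intro x
  have hM : ∀ z, g z ≤ sSup (Set.range g) := fun z => le_csSup hbdd_above ⟨z, rfl⟩
  have hm : ∀ z, sInf (Set.range g) ≤ g z := fun z => csInf_le hbdd_below ⟨z, rfl⟩
  set M := sSup (Set.range g)
  set m := sInf (Set.range g)
  have hpz : ((p : ℤ)) ≠ 0 := by exact_mod_cast hp.ne_zero
  have hinj : Function.Injective (fun f : Fin d → ℤ => (p : ℤ) • f) :=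
    smul_right_injective _ hpz
  rw [Finset.sum_image (fun a _ b _ h => hinj h)]
  rcases F.eq_empty_or_nonempty with rfl | hF
  · simpa using hk 0
  by_cases hdvd : (p : ℤ) ∣ (F.card : ℤ)
  · -- then g is constant
    have hcard : (p : ℤ) ≤ F.card := Int.le_of_dvd (by exact_mod_cast Finset.card_pos.2 hF) hdvd
    have hMm : M - m < 1 := by
      nlinarith [F.card_pos, (show (0:ℤ) ≤ M - m from sub_nonneg.2 ((hm 0).trans (hM 0)))]
    have hconst : ∀ z, g z = m := fun z => le_antisymm (by linarith [hM z, hm z]) (hm z)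
    have := hk x
    simp only [hconst] at this ⊢
    simpa using this
  · -- main case
    set S : AddMonoidAlgebra ℤ (Fin d → ℤ) := ∑ f ∈ F, AddMonoidAlgebra.single f 1 with hS
    set T : AddMonoidAlgebra ℤ (Fin d → ℤ) := ∑ f ∈ F, AddMonoidAlgebra.single ((p:ℤ) • f) 1 with hT
    have hPhiS : ∀ x : Fin d → ℤ, Phi g x S = k := by
      intro x
      rw [hS, map_sum]
      simp only [Phi_single, one_mul]
      exact hk x
    have hPhiT : Phi g x T = ∑ f ∈ F, g (x - (p:ℤ) • f) := by
      rw [hT, map_sum]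
      simp only [Phi_single, one_mul]
    have hmulS : ∀ (x : Fin d → ℤ) (a : AddMonoidAlgebra ℤ (Fin d → ℤ)),
        Phi g x (a * S) = ∑ f ∈ F, Phi g (x - f) a := by
      intro x a
      rw [hS, Finset.mul_sum, map_sum]
      exact Finset.sum_congr rfl fun f _ => Phi_mul_single g x f a
    have hpow : ∀ n (x : Fin d → ℤ), Phi g x (S ^ (n + 1)) = k * (F.card : ℤ) ^ n := by
      intro n
      induction n with
      | zero => intro x; simpa using hPhiS x
      | succ n ih =>
          intro x
          rw [pow_succ, hmulS]
          simp only [ih]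
          rw [Finset.sum_const, nsmul_eq_mul, pow_succ]
          ring
    -- mod p coefficientwise
    have hcoef : ∀ y : Fin d → ℤ, (p : ℤ) ∣ (S ^ p - T).coeff y := by
      intro y
      set R := AddMonoidAlgebra (ZMod p) (Fin d → ℤ) with hR
      haveI : CharP R p :=
        charP_of_injective_ringHom
          (f := AddMonoidAlgebra.singleZeroRingHom (R := ZMod p) (M := Fin d → ℤ))
          (AddMonoidAlgebra.single_right_injective (m := 0)) p
      haveI : Fact p.Prime := ⟨hp⟩
      haveI : ExpChar R p := ExpChar.prime hp
      set ψ : AddMonoidAlgebra ℤ (Fin d → ℤ) →ₐ[ℤ] R :=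
        AddMonoidAlgebra.lift ℤ R (Fin d → ℤ) (AddMonoidAlgebra.of (ZMod p) (Fin d → ℤ)) with hψ
      have hψsingle : ∀ (y : Fin d → ℤ) (c : ℤ),
          ψ (AddMonoidAlgebra.single y c) = AddMonoidAlgebra.single y ((c : ZMod p)) := by
        intro y c
        rw [hψ, AddMonoidAlgebra.lift_single]
        show c • AddMonoidAlgebra.single y (1 : ZMod p) = _
        rw [AddMonoidAlgebra.smul_single, zsmul_eq_mul, mul_one]
      have hψapply : ∀ (a : AddMonoidAlgebra ℤ (Fin d → ℤ)) (y : Fin d → ℤ), (ψ a).coeff y = ((a.coeff y : ℤ) : ZMod p) := by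
        intro a
        induction a using AddMonoidAlgebra.induction_linear with
        | zero => simp
        | add a b ha hb => intro y; rw [map_add, AddMonoidAlgebra.coeff_add, AddMonoidAlgebra.coeff_add, Finsupp.add_apply, Finsupp.add_apply, ha, hb]; push_cast; ring
        | single z c =>
            intro y
            rw [hψsingle]
            simp [AddMonoidAlgebra.coeff_single, Finsupp.single_apply, apply_ite (fun t : ℤ => (t : ZMod p))]
      have hfrob : ψ (S ^ p) = ψ T := by
        rw [map_pow, hS, hT, map_sum, map_sum]
        simp only [hψsingle]
        rw [sum_pow_char]
        refine Finset.sum_congr rfl fun f _ => ?_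
        rw [AddMonoidAlgebra.single_pow, Nat.cast_smul_eq_nsmul]
        norm_num
      have : ((((S ^ p - T).coeff y : ℤ)) : ZMod p) = 0 := by
        rw [AddMonoidAlgebra.coeff_sub, Finsupp.sub_apply]
        push_cast
        rw [← hψapply, ← hψapply, hfrob, sub_self]
      exact (ZMod.intCast_zmod_eq_zero_iff_dvd _ p).1 this
    have hdvd1 : (p : ℤ) ∣ Phi g x (S ^ p) - Phi g x T := by
      rw [← map_sub]
      exact dvd_Phi g x _ _ hcoef
    have hppos : 1 ≤ p := hp.one_lt.le.trans' (by norm_num)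
    have hpow' : Phi g x (S ^ p) = k * (F.card : ℤ) ^ (p - 1) := by
      have := hpow (p - 1) x
      rwa [Nat.sub_add_cancel hp.one_lt.le] at this
    -- Fermat
    have hferm : (p : ℤ) ∣ k * (F.card : ℤ) ^ (p - 1) - k := by
      haveI : Fact p.Prime := ⟨hp⟩
      have hne : ((F.card : ℕ) : ZMod p) ≠ 0 := by
        rw [Ne, ZMod.natCast_eq_zero_iff]
        exact fun hh => hdvd (Int.natCast_dvd_natCast.2 hh)
      have hfe : ((F.card : ℕ) : ZMod p) ^ (p - 1) = 1 := ZMod.pow_card_sub_one_eq_one hne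
      rw [← ZMod.intCast_zmod_eq_zero_iff_dvd]
      push_cast
      rw [hfe]
      ring
    have hdvd2 : (p : ℤ) ∣ (∑ f ∈ F, g (x - (p:ℤ) • f)) - k := by
      have h3 := dvd_sub hdvd1 hferm
      rw [hpow', hPhiT] at h3
      have h4 : k * (F.card : ℤ) ^ (p - 1) - (∑ f ∈ F, g (x - (p:ℤ) • f))
          - (k * (F.card : ℤ) ^ (p - 1) - k) = -((∑ f ∈ F, g (x - (p:ℤ) • f)) - k) := by ring
      rw [h4, dvd_neg] at h3
      exact h3
    -- bounds
    have hbound1 : m * F.card ≤ ∑ f ∈ F, g (x - (p:ℤ) • f) ∧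
        (∑ f ∈ F, g (x - (p:ℤ) • f)) ≤ M * F.card := by
      constructor
      · rw [mul_comm]
        calc (F.card : ℤ) * m = ∑ _f ∈ F, m := by rw [Finset.sum_const, nsmul_eq_mul]
        _ ≤ _ := Finset.sum_le_sum fun f _ => hm _
      · rw [mul_comm]
        calc ∑ f ∈ F, g (x - (p:ℤ) • f) ≤ ∑ _f ∈ F, M := Finset.sum_le_sum fun f _ => hM _
        _ = (F.card : ℤ) * M := by rw [Finset.sum_const, nsmul_eq_mul]
    have hbound2 : m * F.card ≤ k ∧ k ≤ M * F.card := by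
      rw [← hk x]
      constructor
      · rw [mul_comm]
        calc (F.card : ℤ) * m = ∑ _f ∈ F, m := by rw [Finset.sum_const, nsmul_eq_mul]
        _ ≤ _ := Finset.sum_le_sum fun f _ => hm _
      · rw [mul_comm]
        calc ∑ f ∈ F, g (x - f) ≤ ∑ _f ∈ F, M := Finset.sum_le_sum fun f _ => hM _
        _ = (F.card : ℤ) * M := by rw [Finset.sum_const, nsmul_eq_mul]
    have habs : |(∑ f ∈ F, g (x - (p:ℤ) • f)) - k| < (p : ℤ) := by
      rw [abs_lt]
      constructor <;> nlinarith [hbound1.1, hbound1.2, hbound2.1, hbound2.2]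
    have := Int.eq_zero_of_abs_lt_dvd hdvd2 habs
    linarith
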